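/- Let g : ℕ → ℝ satisfy |g(k)| ≤ C·R^k for some constants C, R > 0. Then the function λ ↦ Σ_{k≥0} e^{−λ} λ^k/k! · g(k) is differentiable at every λ > 0, with derivative equal to Σ_{k≥0} e^{−λ} λ^k/k! · (g(k+1) − g(k)); i.e. d/dλ E_λ[g(K)] = E_λ[g(K+1) − g(K)] for K Poisson of mean λ. -/

import Mathlib

/-- For g of at most geometric growth, d/dλ E_λ[g(K)] = E_λ[g(K+1) − g(K)],
K a Poisson random variable of mean λ. -/
theorem poisson_deriv_mean (g : ℕ → ℝ) (C R : ℝ) (hC : 0 < C) (hR : 0 < R)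
    (hg : ∀ k : ℕ, |g k| ≤ C * R ^ k) (lam : ℝ) (hlam : 0 < lam) :
    HasDerivAt (fun l : ℝ => ∑' k : ℕ, Real.exp (-l) * l ^ k / (Nat.factorial k : ℝ) * g k)
      (∑' k : ℕ, Real.exp (-lam) * lam ^ k / (Nat.factorial k : ℝ) * (g (k + 1) - g k))
      lam := by
  set M : ℝ := lam + 1 with hMdef
  have hM1 : (1:ℝ) ≤ M := by simp [hMdef]; linarith
  set A : ℝ := 2 * M * (R + 1) with hAdef
  have hA0 : 0 < A := by positivity
  set F : ℕ → ℝ → ℝ :=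
    fun k l => Real.exp (-l) * l ^ k / (Nat.factorial k : ℝ) * g k with hFdef
  set F' : ℕ → ℝ → ℝ := fun k l =>
    (-Real.exp (-l) * l ^ k + Real.exp (-l) * (k * l ^ (k - 1))) / (Nat.factorial k : ℝ)
      * g k with hF'def
  have hderiv : ∀ (k : ℕ) (l : ℝ), HasDerivAt (F k) (F' k l) l := by
    intro k l
    have h1 : HasDerivAt (fun l : ℝ => Real.exp (-l)) (-Real.exp (-l)) l := by
      simpa using (hasDerivAt_neg l).exp
    have h2 : HasDerivAt (fun l : ℝ => l ^ k) ((k : ℝ) * l ^ (k - 1)) l := hasDerivAt_pow k l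
    exact ((h1.mul h2).div_const (Nat.factorial k : ℝ)).mul_const (g k)
  -- the summable bound
  set u : ℕ → ℝ := fun k => 2 * C * (A ^ k / (Nat.factorial k : ℝ)) with hudef
  have hu : Summable u := (Real.summable_pow_div_factorial A).mul_left (2 * C)
  -- key pointwise bound on the derivative, for |x| ≤ M, x ≥ 0
  have hbound : ∀ (k : ℕ) (x : ℝ), 0 ≤ x → x ≤ M → ‖F' k x‖ ≤ u k := by
    intro k x hx0 hxM
    have hex : Real.exp (-x) ≤ 1 := Real.exp_le_one_iff.2 (by linarith)
    have hex0 : 0 < Real.exp (-x) := Real.exp_pos _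
    have hxk : x ^ k ≤ M ^ k := pow_le_pow_left₀ hx0 hxM k
    have hxk1 : x ^ (k - 1) ≤ M ^ (k - 1) := pow_le_pow_left₀ hx0 hxM _
    have hMk1 : M ^ (k - 1) ≤ M ^ k := pow_le_pow_right₀ hM1 (Nat.sub_le k 1)
    have hk2 : (k : ℝ) ≤ 2 ^ k := by exact_mod_cast (Nat.lt_two_pow_self (n := k)).le
    have hMA : M ^ k * R ^ k ≤ A ^ k := by
      calc M ^ k * R ^ k = (M * R) ^ k := (mul_pow _ _ _).symm
        _ ≤ A ^ k := by
            apply pow_le_pow_left₀ (by positivity)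
            rw [hAdef]; nlinarith [hR.le, hM1]
    have hkMA : (k : ℝ) * M ^ (k - 1) * R ^ k ≤ A ^ k := by
      calc (k : ℝ) * M ^ (k - 1) * R ^ k ≤ 2 ^ k * M ^ k * R ^ k := by
            apply mul_le_mul_of_nonneg_right _ (by positivity)
            exact mul_le_mul hk2 hMk1 (by positivity) (by positivity)
        _ = (2 * M * R) ^ k := by rw [mul_pow, mul_pow]
        _ ≤ A ^ k := by
            apply pow_le_pow_left₀ (by positivity)
            rw [hAdef]; nlinarith [hR.le, hM1]
    have hgk := hg k
    have hRk : (0:ℝ) < R ^ k := by positivity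
    have hfact : (0:ℝ) < (Nat.factorial k : ℝ) := by exact_mod_cast k.factorial_pos
    rw [hF'def]
    simp only [Real.norm_eq_abs]
    rw [abs_mul, abs_div, abs_of_pos hfact]
    have habs : |(-Real.exp (-x) * x ^ k + Real.exp (-x) * ((k : ℝ) * x ^ (k - 1)))|
        ≤ M ^ k + (k : ℝ) * M ^ (k - 1) := by
      calc |(-Real.exp (-x) * x ^ k + Real.exp (-x) * ((k : ℝ) * x ^ (k - 1)))|
          ≤ |(-Real.exp (-x) * x ^ k)| + |Real.exp (-x) * ((k : ℝ) * x ^ (k - 1))| :=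
            abs_add_le _ _
        _ = Real.exp (-x) * x ^ k + Real.exp (-x) * ((k : ℝ) * x ^ (k - 1)) := by
            rw [abs_mul, abs_mul, abs_neg, abs_of_pos hex0, abs_of_nonneg (by positivity : (0:ℝ) ≤ x ^ k), abs_of_nonneg (by positivity : (0:ℝ) ≤ (k:ℝ) * x ^ (k-1))]
        _ ≤ 1 * M ^ k + 1 * ((k : ℝ) * M ^ (k - 1)) := by
            apply add_le_add
            · exact mul_le_mul hex hxk (by positivity) (by norm_num)
            · exact mul_le_mul hex (by nlinarith [hxk1]) (by positivity) (by norm_num)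
        _ = M ^ k + (k : ℝ) * M ^ (k - 1) := by ring
    calc |(-Real.exp (-x) * x ^ k + Real.exp (-x) * ((k : ℝ) * x ^ (k - 1)))|
          / (Nat.factorial k : ℝ) * |g k|
        ≤ (M ^ k + (k : ℝ) * M ^ (k - 1)) / (Nat.factorial k : ℝ) * (C * R ^ k) := by
          gcongr
      _ = (M ^ k * R ^ k + (k : ℝ) * M ^ (k - 1) * R ^ k) * C / (Nat.factorial k : ℝ) := by
          ring
      _ ≤ (A ^ k + A ^ k) * C / (Nat.factorial k : ℝ) := by gcongr
      _ = u k := by rw [hudef]; ring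
  -- summability of F at lam
  have hFsum : Summable fun k => F k lam := by
    apply Summable.of_norm_bounded hu
    intro k
    have hex : Real.exp (-lam) ≤ 1 := Real.exp_le_one_iff.2 (by linarith)
    have hfact : (0:ℝ) < (Nat.factorial k : ℝ) := by exact_mod_cast k.factorial_pos
    have hlk : lam ^ k ≤ M ^ k := pow_le_pow_left₀ hlam.le (by rw [hMdef]; linarith) k
    have hMA : M ^ k * R ^ k ≤ A ^ k := by
      calc M ^ k * R ^ k = (M * R) ^ k := (mul_pow _ _ _).symm
        _ ≤ A ^ k := by
            apply pow_le_pow_left₀ (by positivity)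
            rw [hAdef]; nlinarith [hR.le, hM1]
    rw [hFdef]
    simp only [Real.norm_eq_abs]
    rw [abs_mul, abs_div, abs_of_pos hfact, abs_mul,
      abs_of_pos (Real.exp_pos _), abs_of_nonneg (by positivity : (0:ℝ) ≤ lam ^ k)]
    calc Real.exp (-lam) * lam ^ k / (Nat.factorial k : ℝ) * |g k|
        ≤ 1 * M ^ k / (Nat.factorial k : ℝ) * (C * R ^ k) := by gcongr <;> first | exact hg k | rfl
      _ = C * (M ^ k * R ^ k) / (Nat.factorial k : ℝ) := by ring
      _ ≤ C * A ^ k / (Nat.factorial k : ℝ) := by gcongr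
      _ ≤ u k := by
          rw [hudef, mul_div_assoc]
          have h : (0:ℝ) ≤ A ^ k / (Nat.factorial k : ℝ) := by positivity
          nlinarith
  -- the main derivative statement
  have hmain : HasDerivAt (fun l : ℝ => ∑' k : ℕ, F k l) (∑' k : ℕ, F' k lam) lam := by
    apply hasDerivAt_tsum_of_isPreconnected hu (isOpen_Ioo (a := (0:ℝ)) (b := M))
      (isPreconnected_Ioo) (fun k y _ => hderiv k y)
      (fun k y hy => hbound k y hy.1.le hy.2.le) (y₀ := lam) ⟨hlam, by rw [hMdef]; linarith⟩
      hFsum ⟨hlam, by rw [hMdef]; linarith⟩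
  -- now identify the derivative sum with the target
  have hF'sum : Summable fun k => F' k lam :=
    Summable.of_norm_bounded hu fun k => hbound k lam hlam.le (by rw [hMdef]; linarith)
  set B : ℕ → ℝ := fun k => Real.exp (-lam) * ((k : ℝ) * lam ^ (k - 1))
      / (Nat.factorial k : ℝ) * g k with hBdef
  have hFB : ∀ k, F' k lam = B k - F k lam := by
    intro k
    rw [hF'def, hFdef, hBdef]
    ring
  have hBsum : Summable B := by
    have : (fun k => F' k lam + F k lam) = B := by
      funext k; rw [hFB k]; ring
    rw [← this]; exact hF'sum.add hFsum
  have hBshift : ∀ k : ℕ, B (k + 1)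
      = Real.exp (-lam) * lam ^ k / (Nat.factorial k : ℝ) * g (k + 1) := by
    intro k
    rw [hBdef]
    have hfact : ((Nat.factorial (k+1) : ℝ)) = (k + 1) * (Nat.factorial k : ℝ) := by
      push_cast [Nat.factorial_succ]; ring
    simp only [Nat.add_sub_cancel, hfact]
    have h1 : ((k : ℝ) + 1) ≠ 0 := by positivity
    have h2 : (Nat.factorial k : ℝ) ≠ 0 := by
      exact_mod_cast k.factorial_ne_zero
    push_cast
    field_simp
  have hBsum' : Summable fun k => Real.exp (-lam) * lam ^ k / (Nat.factorial k : ℝ) * g (k + 1) := by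
    have := (summable_nat_add_iff 1).2 hBsum
    simpa only [hBshift] using this
  have htB : ∑' k, B k = ∑' k, Real.exp (-lam) * lam ^ k / (Nat.factorial k : ℝ) * g (k + 1) := by
    rw [hBsum.tsum_eq_zero_add]
    have hB0 : B 0 = 0 := by rw [hBdef]; simp
    rw [hB0, zero_add]
    exact tsum_congr hBshift
  have hkey : (∑' k : ℕ, Real.exp (-lam) * lam ^ k / (Nat.factorial k : ℝ) * (g (k + 1) - g k))
      = ∑' k, F' k lam := by
    have h1 : (fun k : ℕ => Real.exp (-lam) * lam ^ k / (Nat.factorial k : ℝ) * (g (k + 1) - g k))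
        = fun k => (Real.exp (-lam) * lam ^ k / (Nat.factorial k : ℝ) * g (k + 1)) - F k lam := by
      funext k; rw [hFdef]; ring
    rw [h1, hBsum'.tsum_sub hFsum, ← htB, ← hBsum.tsum_sub hFsum]
    exact tsum_congr fun k => (hFB k).symm
  rw [hkey]
  exact hmain
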